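/- arXiv:2108.06496 — 3 statements merged into one kernel-verified Lean document; each statement's English description precedes it below -/
import Mathlib

section
/- Let Ω be a cone domain {(r cos θ, r sin θ) : α < θ < β, 0 < r < ∞} with 0 ≤ α < β ≤ 2π, let C₁, C₂ ∈ ℝ with C₂ ≠ 0, and let u(x, y) = (C₁ + C₂ ln r)·(−y, x) where r = √(x² + y²). Then: (1) u extends to a continuous function on the closure of Ω with u → 0 as (x, y) → (0, 0); (2) for every γ ∈ (0, 1), u is locally γ-Hölder continuous on the closure of Ω near the origin; and (3) the gradient ∇u is unbounded on every punctured neighborhood of the origin in Ω (in particular ∂₂u₁(x,y) = −(C₁ + C₂ ln r + C₂ sin²θ) blows up as r → 0). -/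
open Real Set Filter

/-- Partial derivative in the second coordinate direction. -/
noncomputable def pdy (f : ℝ × ℝ → ℝ) (z : ℝ × ℝ) : ℝ := fderiv ℝ f z (0, 1)

/-- The cone domain `{(r cos θ, r sin θ) : α < θ < β, 0 < r < ∞}`. -/
def coneDomain (α β : ℝ) : Set (ℝ × ℝ) :=
  {z | ∃ r θ : ℝ, 0 < r ∧ α < θ ∧ θ < β ∧ z = (r * cos θ, r * sin θ)}

namespace BBaux

noncomputable def eN (z : ℝ × ℝ) : ℝ := ‖Complex.mk z.1 z.2‖

lemma eN_eq (z : ℝ × ℝ) : eN z = Real.sqrt (z.1 ^ 2 + z.2 ^ 2) := by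
  simp [eN, Complex.norm_def, Complex.normSq_mk, pow_two]

lemma eN_nonneg (z : ℝ × ℝ) : 0 ≤ eN z := norm_nonneg _

lemma eN_zero : eN 0 = 0 := by
  have : Complex.mk (0:ℝ) 0 = 0 := by apply Complex.ext <;> simp
  simp [eN, this]

lemma eN_eq_zero_iff (z : ℝ × ℝ) : eN z = 0 ↔ z = 0 := by
  constructor
  · intro h
    have h2 : Complex.mk z.1 z.2 = 0 := by
      simpa [eN] using h
    have h3 : z.1 = 0 ∧ z.2 = 0 := by
      constructor
      · simpa using congrArg Complex.re h2
      · simpa using congrArg Complex.im h2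
    exact Prod.ext h3.1 h3.2
  · intro h; subst h; exact eN_zero

lemma eN_pos (z : ℝ × ℝ) (hz : z ≠ 0) : 0 < eN z :=
  lt_of_le_of_ne (eN_nonneg z) (fun h => hz ((eN_eq_zero_iff z).1 h.symm))

lemma norm_le_eN (z : ℝ × ℝ) : ‖z‖ ≤ eN z := by
  rw [Prod.norm_def]
  exact max_le (by simpa [eN, Real.norm_eq_abs] using Complex.abs_re_le_norm (Complex.mk z.1 z.2))
    (by simpa [eN, Real.norm_eq_abs] using Complex.abs_im_le_norm (Complex.mk z.1 z.2))

lemma eN_le_two_norm (z : ℝ × ℝ) : eN z ≤ 2 * ‖z‖ := by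
  have h := Complex.norm_le_abs_re_add_abs_im (Complex.mk z.1 z.2)
  have h1 : |z.1| ≤ ‖z‖ := by rw [Prod.norm_def]; simpa [Real.norm_eq_abs] using le_max_left |z.1| |z.2|
  have h2 : |z.2| ≤ ‖z‖ := by rw [Prod.norm_def]; simpa [Real.norm_eq_abs] using le_max_right |z.1| |z.2|
  simp only [eN]
  calc ‖Complex.mk z.1 z.2‖ ≤ |z.1| + |z.2| := h
  _ ≤ 2 * ‖z‖ := by linarith

lemma mk_sub (a b c d : ℝ) : Complex.mk (a - c) (b - d) = Complex.mk a b - Complex.mk c d := by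
  apply Complex.ext <;> simp

lemma eN_sub_eN_le (z z' : ℝ × ℝ) : eN z - eN z' ≤ eN (z - z') := by
  simp only [eN, Prod.fst_sub, Prod.snd_sub, mk_sub]
  exact norm_sub_norm_le _ _

lemma eN_sub_le_add (z z' : ℝ × ℝ) : eN (z - z') ≤ eN z + eN z' := by
  simp only [eN, Prod.fst_sub, Prod.snd_sub, mk_sub]
  exact norm_sub_le _ _

lemma neg_log_le (a c : ℝ) (ha : 0 < a) (hc : 0 < c) : -Real.log a ≤ c⁻¹ * a ^ (-c) := by
  have hia : 0 < a⁻¹ := inv_pos.2 ha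
  have h1 : Real.log ((a⁻¹) ^ c) = c * Real.log a⁻¹ := Real.log_rpow hia c
  have h2 : Real.log ((a⁻¹) ^ c) ≤ (a⁻¹) ^ c - 1 :=
    Real.log_le_sub_one_of_pos (Real.rpow_pos_of_pos hia c)
  have h3 : (a⁻¹ : ℝ) ^ c = a ^ (-c) := by
    rw [Real.inv_rpow ha.le, Real.rpow_neg ha.le]
  have h4 : -Real.log a = Real.log a⁻¹ := (Real.log_inv a).symm
  have h5 : -Real.log a ≤ c⁻¹ * ((a⁻¹) ^ c - 1) := by
    rw [h4]
    have := h1 ▸ h2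
    calc Real.log a⁻¹ = c⁻¹ * (c * Real.log a⁻¹) := by field_simp
    _ ≤ c⁻¹ * ((a⁻¹) ^ c - 1) := by
        apply mul_le_mul_of_nonneg_left _ (inv_nonneg.2 hc.le)
        rw [← h1]; exact h2
  calc -Real.log a ≤ c⁻¹ * ((a⁻¹) ^ c - 1) := h5
  _ ≤ c⁻¹ * (a⁻¹) ^ c := by
      apply mul_le_mul_of_nonneg_left _ (inv_nonneg.2 hc.le)
      linarith
  _ = c⁻¹ * a ^ (-c) := by rw [h3]


noncomputable def gg (C₁ C₂ : ℝ) (z : ℝ × ℝ) : ℝ := C₁ + C₂ * Real.log (eN z)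

lemma holder_core (C₁ C₂ γ : ℝ) (hγ0 : 0 < γ) (hγ1 : γ < 1) :
    ∃ M : ℝ, 0 ≤ M ∧ ∀ z z' : ℝ × ℝ, eN z ≤ 1/2 → eN z' ≤ eN z →
      ‖gg C₁ C₂ z • z - gg C₁ C₂ z' • z'‖ ≤ M * ‖z - z'‖ ^ γ := by
  set c : ℝ := 1 - γ with hcdef
  have hc : 0 < c := by simp [hcdef]; linarith
  refine ⟨2*|C₁| + 2*|C₂| + 4*(|C₂|/c), by positivity, ?_⟩
  intro z z' hz hz'
  by_cases hz0 : z = 0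
  · -- then z' = 0 as well
    have hb0 : eN z' = 0 := le_antisymm (by simpa [hz0, eN_zero] using hz') (eN_nonneg z')
    have hz'0 : z' = 0 := (eN_eq_zero_iff z').1 hb0
    subst hz0; subst hz'0
    simp only [smul_zero, sub_zero, norm_zero]
    positivity
  by_cases hzz : z = z'
  · subst hzz
    simp only [sub_self, norm_zero]
    positivity
  -- now z ≠ 0
  have ha : 0 < eN z := eN_pos z hz0
  set a := eN z with hadef
  set b := eN z' with hbdef
  set d := ‖z - z'‖ with hddef
  have hd0 : 0 < d := by
    rw [hddef]; exact norm_pos_iff.2 (sub_ne_zero.2 hzz)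
  have hde1 : d ≤ eN (z - z') := norm_le_eN _
  have hde2 : eN (z - z') ≤ a + b := eN_sub_le_add z z'
  have hd2a : d ≤ 2 * a := le_trans hde1 (by have := eN_nonneg z'; linarith)
  have hd1 : d ≤ 1 := by linarith
  have hdγ : d ≤ d ^ γ := by
    calc d = d ^ (1:ℝ) := (Real.rpow_one d).symm
    _ ≤ d ^ γ := Real.rpow_le_rpow_of_exponent_ge hd0 hd1 hγ1.le
  have hdγ0 : 0 < d ^ γ := Real.rpow_pos_of_pos hd0 γ
  -- bound on |g z|
  have hloga : |Real.log a| = -Real.log a :=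
    abs_of_nonpos (Real.log_nonpos ha.le (by linarith))
  have hlogb : -Real.log a ≤ c⁻¹ * a ^ (-c) := neg_log_le a c ha hc
  have hgz : |gg C₁ C₂ z| ≤ |C₁| + |C₂| * (c⁻¹ * a ^ (-c)) := by
    calc |gg C₁ C₂ z| ≤ |C₁| + |C₂ * Real.log a| := abs_add_le _ _
    _ = |C₁| + |C₂| * |Real.log a| := by rw [abs_mul]
    _ ≤ |C₁| + |C₂| * (c⁻¹ * a ^ (-c)) := by
        rw [hloga]; exact add_le_add (le_refl _) (mul_le_mul_of_nonneg_left hlogb (abs_nonneg _))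
  -- key rpow estimate : a^{-c} * d ≤ 2 * d^γ
  have hkey : a ^ (-c) * d ≤ 2 * d ^ γ := by
    have h1 : d = d ^ γ * d ^ c := by
      rw [← Real.rpow_add hd0]; norm_num [hcdef]
    have h2 : d ^ c ≤ (2*a) ^ c := Real.rpow_le_rpow hd0.le hd2a hc.le
    have h3 : (2*a) ^ c = 2 ^ c * a ^ c := Real.mul_rpow (by norm_num) ha.le
    have h4 : (2:ℝ) ^ c ≤ 2 := by
      calc (2:ℝ) ^ c ≤ (2:ℝ) ^ (1:ℝ) :=
        Real.rpow_le_rpow_of_exponent_le one_le_two (by linarith)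
      _ = 2 := Real.rpow_one 2
    have h5 : a ^ (-c) * a ^ c = 1 := by
      rw [← Real.rpow_add ha]; simp
    calc a ^ (-c) * d = a ^ (-c) * (d ^ γ * d ^ c) := by rw [← h1]
    _ ≤ a ^ (-c) * (d ^ γ * (2 ^ c * a ^ c)) := by
        apply mul_le_mul_of_nonneg_left _ (Real.rpow_nonneg ha.le _)
        apply mul_le_mul_of_nonneg_left _ hdγ0.le
        rw [← h3]; exact h2
    _ = (a ^ (-c) * a ^ c) * 2 ^ c * d ^ γ := by ring
    _ = 2 ^ c * d ^ γ := by rw [h5]; ring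
    _ ≤ 2 * d ^ γ := mul_le_mul_of_nonneg_right h4 hdγ0.le
  by_cases hz'0 : z' = 0
  · -- case z' = 0
    subst hz'0
    have hdna : d = ‖z‖ := by rw [hddef, sub_zero]
    have h1 : ‖gg C₁ C₂ z • z - gg C₁ C₂ 0 • (0:ℝ×ℝ)‖ = |gg C₁ C₂ z| * ‖z‖ := by
      rw [smul_zero, sub_zero, norm_smul, Real.norm_eq_abs]
    rw [h1]
    have hna : ‖z‖ ≤ a := norm_le_eN z
    calc |gg C₁ C₂ z| * ‖z‖ ≤ (|C₁| + |C₂| * (c⁻¹ * a ^ (-c))) * ‖z‖ :=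
      mul_le_mul_of_nonneg_right hgz (norm_nonneg _)
    _ = |C₁| * ‖z‖ + (|C₂| * c⁻¹) * (a ^ (-c) * ‖z‖) := by ring
    _ ≤ |C₁| * d ^ γ + (|C₂| * c⁻¹) * (2 * d ^ γ) := by
        apply add_le_add
        · apply mul_le_mul_of_nonneg_left _ (abs_nonneg _)
          rw [← hdna] at hna ⊢
          linarith
        · apply mul_le_mul_of_nonneg_left _ (by positivity)
          rw [← hdna]
          exact hkey
    _ ≤ (2*|C₁| + 2*|C₂| + 4*(|C₂|/c)) * d ^ γ := by
        have hCc : |C₂| * c⁻¹ = |C₂|/c := by rw [div_eq_mul_inv]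
        rw [hCc]
        nlinarith [abs_nonneg C₁, abs_nonneg C₂, div_nonneg (abs_nonneg C₂) hc.le, hdγ0.le]
  · -- main case : z, z' ≠ 0
    have hb : 0 < b := eN_pos z' hz'0
    have hba : b ≤ a := hz'
    have hdec : gg C₁ C₂ z • z - gg C₁ C₂ z' • z' =
        gg C₁ C₂ z • (z - z') + (C₂ * (Real.log a - Real.log b)) • z' := by
      have hgdiff : gg C₁ C₂ z - gg C₁ C₂ z' = C₂ * (Real.log a - Real.log b) := by
        simp only [gg]; ring
      rw [smul_sub, ← hgdiff, sub_smul]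
      abel
    rw [hdec]
    have hlog : Real.log a - Real.log b ≤ (a - b)/b := by
      have h1 : Real.log a - Real.log b = Real.log (a/b) := (Real.log_div ha.ne' hb.ne').symm
      have h2 : Real.log (a/b) ≤ a/b - 1 := Real.log_le_sub_one_of_pos (div_pos ha hb)
      rw [h1]
      calc Real.log (a/b) ≤ a/b - 1 := h2
      _ = (a - b)/b := by field_simp
    have hlognn : 0 ≤ Real.log a - Real.log b := by
      have := Real.log_le_log hb hba
      linarith
    have hterm2 : ‖(C₂ * (Real.log a - Real.log b)) • z'‖ ≤ 2 * |C₂| * d := by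
      rw [norm_smul, Real.norm_eq_abs, abs_mul]
      have hnb : ‖z'‖ ≤ b := norm_le_eN z'
      have hab : a - b ≤ 2 * d := by
        have h1 := eN_sub_eN_le z z'
        have h2 : eN (z - z') ≤ 2 * d := by rw [hddef]; exact eN_le_two_norm _
        linarith
      calc |C₂| * |Real.log a - Real.log b| * ‖z'‖
          ≤ |C₂| * ((a-b)/b) * b := by
            apply mul_le_mul _ hnb (norm_nonneg _)
              (mul_nonneg (abs_nonneg _) (div_nonneg (by linarith) hb.le))
            rw [abs_of_nonneg hlognn]
            exact mul_le_mul_of_nonneg_left hlog (abs_nonneg _)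
      _ = |C₂| * (a - b) := by field_simp
      _ ≤ |C₂| * (2*d) := mul_le_mul_of_nonneg_left hab (abs_nonneg _)
      _ = 2 * |C₂| * d := by ring
    have hterm1 : ‖gg C₁ C₂ z • (z - z')‖ ≤ |C₁| * d ^ γ + (|C₂| * c⁻¹) * (2 * d ^ γ) := by
      rw [norm_smul, Real.norm_eq_abs, ← hddef]
      calc |gg C₁ C₂ z| * d ≤ (|C₁| + |C₂| * (c⁻¹ * a ^ (-c))) * d :=
        mul_le_mul_of_nonneg_right hgz hd0.le
      _ = |C₁| * d + (|C₂| * c⁻¹) * (a ^ (-c) * d) := by ring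
      _ ≤ |C₁| * d ^ γ + (|C₂| * c⁻¹) * (2 * d ^ γ) := by
          apply add_le_add
          · exact mul_le_mul_of_nonneg_left hdγ (abs_nonneg _)
          · exact mul_le_mul_of_nonneg_left hkey (by positivity)
    calc ‖gg C₁ C₂ z • (z - z') + (C₂ * (Real.log a - Real.log b)) • z'‖
        ≤ ‖gg C₁ C₂ z • (z - z')‖ + ‖(C₂ * (Real.log a - Real.log b)) • z'‖ := norm_add_le _ _
    _ ≤ (|C₁| * d ^ γ + (|C₂| * c⁻¹) * (2 * d ^ γ)) + 2 * |C₂| * d := by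
        exact add_le_add hterm1 hterm2
    _ ≤ (2*|C₁| + 2*|C₂| + 4*(|C₂|/c)) * d ^ γ := by
        have hCc : |C₂| * c⁻¹ = |C₂|/c := by rw [div_eq_mul_inv]
        rw [hCc]
        nlinarith [abs_nonneg C₁, abs_nonneg C₂, div_nonneg (abs_nonneg C₂) hc.le, hdγ0.le, hdγ]

noncomputable def uF (C₁ C₂ : ℝ) (z : ℝ × ℝ) : ℝ × ℝ :=
  ((C₁ + C₂ * Real.log (Real.sqrt (z.1^2 + z.2^2))) * (-z.2),
   (C₁ + C₂ * Real.log (Real.sqrt (z.1^2 + z.2^2))) * z.1)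

lemma gg_eq (C₁ C₂ : ℝ) (z : ℝ × ℝ) :
    gg C₁ C₂ z = C₁ + C₂ * Real.log (Real.sqrt (z.1^2 + z.2^2)) := by
  rw [gg, eN_eq]

lemma norm_uF_sub (C₁ C₂ : ℝ) (z z' : ℝ × ℝ) :
    ‖uF C₁ C₂ z - uF C₁ C₂ z'‖ = ‖gg C₁ C₂ z • z - gg C₁ C₂ z' • z'‖ := by
  set A := gg C₁ C₂ z with hA
  set B := gg C₁ C₂ z' with hB
  have h1 : uF C₁ C₂ z = (A * (-z.2), A * z.1) := by
    rw [uF, hA, gg_eq]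
  have h2 : uF C₁ C₂ z' = (B * (-z'.2), B * z'.1) := by
    rw [uF, hB, gg_eq]
  rw [h1, h2]
  simp only [Prod.norm_def, Prod.fst_sub, Prod.snd_sub, Prod.smul_fst, Prod.smul_snd,
    smul_eq_mul, Real.norm_eq_abs]
  rw [max_comm]
  congr 1
  have h3 : A * -z.2 - B * -z'.2 = -(A * z.2 - B * z'.2) := by ring
  rw [h3, abs_neg]

lemma uF_zero (C₁ C₂ : ℝ) : uF C₁ C₂ 0 = 0 := by
  simp [uF]

lemma sq_sum_ne (z : ℝ × ℝ) (hz : z ≠ 0) : z.1 ^ 2 + z.2 ^ 2 ≠ 0 := by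
  intro h
  apply hz
  have h1 : z.1 = 0 := by nlinarith [sq_nonneg z.1, sq_nonneg z.2]
  have h2 : z.2 = 0 := by nlinarith [sq_nonneg z.1, sq_nonneg z.2]
  exact Prod.ext h1 h2

lemma uF_cont (C₁ C₂ : ℝ) : Continuous (uF C₁ C₂) := by
  rw [continuous_iff_continuousAt]
  intro z
  by_cases hz : z = 0
  · -- continuity at 0 via the Hölder bound
    subst hz
    rw [ContinuousAt, uF_zero]
    obtain ⟨M, hM0, hM⟩ := holder_core C₁ C₂ (1/2) (by norm_num) (by norm_num)
    have hb : ∀ᶠ w : ℝ × ℝ in nhds 0, ‖uF C₁ C₂ w‖ ≤ M * ‖w‖ ^ ((1:ℝ)/2) := by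
      filter_upwards [Metric.ball_mem_nhds (0 : ℝ × ℝ) (by norm_num : (0:ℝ) < 1/4)] with w hw
      have hw' : ‖w‖ < 1/4 := by simpa [Metric.mem_ball] using hw
      have he : eN w ≤ 1/2 := by
        have := eN_le_two_norm w
        linarith
      have h0 : eN (0 : ℝ×ℝ) ≤ eN w := by rw [eN_zero]; exact eN_nonneg w
      have := hM w 0 he h0
      rw [← norm_uF_sub] at this
      simpa [uF_zero] using this
    have hg : Tendsto (fun w : ℝ × ℝ => M * ‖w‖ ^ ((1:ℝ)/2)) (nhds 0) (nhds 0) := by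
      have h1 : Tendsto (fun w : ℝ × ℝ => ‖w‖) (nhds 0) (nhds 0) := by
        simpa using (continuous_norm (E := ℝ × ℝ)).tendsto 0
      have h2 : ContinuousAt (fun x : ℝ => x ^ ((1:ℝ)/2)) 0 :=
        Real.continuousAt_rpow_const 0 _ (Or.inr (by norm_num))
      have h3 : Tendsto (fun w : ℝ × ℝ => ‖w‖ ^ ((1:ℝ)/2)) (nhds 0) (nhds 0) := by
        have := h2.tendsto.comp h1
        simpa [Real.zero_rpow, Function.comp_def] using this
      have := h3.const_mul M
      simpa using this
    exact squeeze_zero_norm' hb hg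
  · have hne : Real.sqrt (z.1^2 + z.2^2) ≠ 0 := by
      rw [Real.sqrt_ne_zero']
      rcases lt_or_eq_of_le (by positivity : (0:ℝ) ≤ z.1^2 + z.2^2) with h | h
      · exact h
      · exact absurd h.symm (sq_sum_ne z hz)
    have hlog : ContinuousAt (fun w : ℝ × ℝ => Real.log (Real.sqrt (w.1^2 + w.2^2))) z := by
      have hsq : ContinuousAt (fun w : ℝ × ℝ => Real.sqrt (w.1^2 + w.2^2)) z :=
        (Real.continuous_sqrt.comp ((continuous_fst.pow 2).add (continuous_snd.pow 2))).continuousAt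
      exact ContinuousAt.comp (g := Real.log) (Real.continuousAt_log hne) hsq
    have hg : ContinuousAt (fun w : ℝ × ℝ => C₁ + C₂ * Real.log (Real.sqrt (w.1^2 + w.2^2))) z :=
      continuousAt_const.add (continuousAt_const.mul hlog)
    exact (hg.mul continuous_snd.continuousAt.neg).prodMk (hg.mul continuous_fst.continuousAt)

lemma deriv_comp1 (C₁ C₂ x y : ℝ) (h : x^2 + y^2 ≠ 0) :
    ∃ L : ℝ × ℝ →L[ℝ] ℝ,
      HasFDerivAt (fun w : ℝ × ℝ =>
          (C₁ + C₂ * Real.log (Real.sqrt (w.1^2 + w.2^2))) * (-w.2)) L (x, y) ∧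
      L (0, 1) = -((C₁ + C₂ * Real.log (Real.sqrt (x^2 + y^2))) + C₂ * (y^2/(x^2+y^2))) := by
  have hfun : (fun w : ℝ × ℝ => (C₁ + C₂ * Real.log (Real.sqrt (w.1^2 + w.2^2))) * (-w.2))
      = (fun w : ℝ × ℝ => (C₁ + (C₂/2) * Real.log (w.1*w.1 + w.2*w.2)) * (-w.2)) := by
    funext w
    rw [Real.log_sqrt (by positivity)]
    have : w.1 ^ 2 + w.2 ^ 2 = w.1*w.1 + w.2*w.2 := by ring
    rw [this]; ring
  have hx : HasFDerivAt (fun w : ℝ × ℝ => w.1) (ContinuousLinearMap.fst ℝ ℝ ℝ) (x,y) :=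
    hasFDerivAt_fst
  have hy : HasFDerivAt (fun w : ℝ × ℝ => w.2) (ContinuousLinearMap.snd ℝ ℝ ℝ) (x,y) :=
    hasFDerivAt_snd
  have h1 := (hx.mul hx).add (hy.mul hy)
  have hsne : (fun w : ℝ × ℝ => w.1*w.1 + w.2*w.2) (x,y) ≠ 0 := by
    have he : x*x + y*y = x^2 + y^2 := by ring
    simpa [he] using h
  have h2 := h1.log hsne
  have h3 := (h2.const_mul (C₂/2)).const_add C₁
  have h4 := h3.mul hy.neg
  refine ⟨_, by rw [hfun]; exact h4, ?_⟩
  simp only [ContinuousLinearMap.add_apply, ContinuousLinearMap.smul_apply,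
    ContinuousLinearMap.coe_fst', ContinuousLinearMap.coe_snd',
    ContinuousLinearMap.neg_apply, smul_eq_mul, Pi.mul_apply, Pi.add_apply, Pi.neg_apply]
  rw [Real.log_sqrt (by positivity)]
  have he : x*x + y*y = x^2 + y^2 := by ring
  rw [he]
  have hlog : Real.log (x^2+y^2) / 2 = Real.log (x^2+y^2) * (1/2) := by ring
  field_simp
  ring

lemma deriv_comp2 (C₁ C₂ x y : ℝ) (h : x^2 + y^2 ≠ 0) :
    ∃ L : ℝ × ℝ →L[ℝ] ℝ,
      HasFDerivAt (fun w : ℝ × ℝ =>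
          (C₁ + C₂ * Real.log (Real.sqrt (w.1^2 + w.2^2))) * w.1) L (x, y) := by
  have hfun : (fun w : ℝ × ℝ => (C₁ + C₂ * Real.log (Real.sqrt (w.1^2 + w.2^2))) * w.1)
      = (fun w : ℝ × ℝ => (C₁ + (C₂/2) * Real.log (w.1*w.1 + w.2*w.2)) * w.1) := by
    funext w
    rw [Real.log_sqrt (by positivity)]
    have : w.1 ^ 2 + w.2 ^ 2 = w.1*w.1 + w.2*w.2 := by ring
    rw [this]; ring
  have hx : HasFDerivAt (fun w : ℝ × ℝ => w.1) (ContinuousLinearMap.fst ℝ ℝ ℝ) (x,y) :=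
    hasFDerivAt_fst
  have hy : HasFDerivAt (fun w : ℝ × ℝ => w.2) (ContinuousLinearMap.snd ℝ ℝ ℝ) (x,y) :=
    hasFDerivAt_snd
  have h1 := (hx.mul hx).add (hy.mul hy)
  have hsne : (fun w : ℝ × ℝ => w.1*w.1 + w.2*w.2) (x,y) ≠ 0 := by
    have he : x*x + y*y = x^2 + y^2 := by ring
    simpa [he] using h
  have h2 := h1.log hsne
  have h3 := (h2.const_mul (C₂/2)).const_add C₁
  exact ⟨_, by rw [hfun]; exact h3.mul hx⟩

end BBaux

/-- Boundary blow-up phenomenon: the field `u = (C₁ + C₂ ln r)(−y, x)` on a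
cone domain extends continuously (with value `0`) to the corner, is locally
`γ`-Hölder continuous near the corner for every `γ ∈ (0,1)`, yet its gradient
is unbounded on every punctured neighborhood of the corner; in particular
`∂₂u₁ = −(C₁ + C₂ ln r + C₂ sin²θ)`. -/
theorem boundary_blowup (α β : ℝ) (hα : 0 ≤ α) (hαβ : α < β) (hβ : β ≤ 2 * π)
    (C₁ C₂ : ℝ) (hC₂ : C₂ ≠ 0)
    (u : ℝ × ℝ → ℝ × ℝ)
    (hu : ∀ z : ℝ × ℝ, u z =
      ((C₁ + C₂ * Real.log (Real.sqrt (z.1^2 + z.2^2))) * (-z.2),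
       (C₁ + C₂ * Real.log (Real.sqrt (z.1^2 + z.2^2))) * z.1)) :
    -- (1) continuous extension to the closure, vanishing at the corner
    ((∃ ubar : ℝ × ℝ → ℝ × ℝ,
        ContinuousOn ubar (closure (coneDomain α β)) ∧
        EqOn ubar u (coneDomain α β)) ∧
      Tendsto u (nhdsWithin 0 (coneDomain α β)) (nhds 0)) ∧
    -- (2) local γ-Hölder continuity near the corner for every γ ∈ (0,1)
    (∀ γ : ℝ, 0 < γ → γ < 1 →
      ∃ U ∈ nhds (0 : ℝ × ℝ), ∃ M : ℝ,
        ∀ z ∈ U ∩ closure (coneDomain α β),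
          ∀ z' ∈ U ∩ closure (coneDomain α β),
            ‖u z - u z'‖ ≤ M * ‖z - z'‖ ^ γ) ∧
    -- (3) the gradient blows up at the corner
    ((∀ r θ : ℝ, 0 < r → α < θ → θ < β →
        pdy (fun w => (u w).1) (r * cos θ, r * sin θ)
          = -(C₁ + C₂ * Real.log r + C₂ * (sin θ)^2)) ∧
      ∀ M : ℝ, ∀ ε : ℝ, 0 < ε → ∃ z ∈ coneDomain α β,
        ‖z‖ < ε ∧ M < ‖fderiv ℝ u z‖) := by
  have huF : u = BBaux.uF C₁ C₂ := funext fun z => by rw [hu]; rfl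
  refine ⟨⟨⟨u, ?_, fun z _ => rfl⟩, ?_⟩, ?_, ?_, ?_⟩
  · rw [huF]; exact (BBaux.uF_cont C₁ C₂).continuousOn
  · have h0 : BBaux.uF C₁ C₂ 0 = 0 := BBaux.uF_zero C₁ C₂
    rw [huF]
    have h1 := (BBaux.uF_cont C₁ C₂).tendsto 0
    rw [h0] at h1
    exact h1.mono_left nhdsWithin_le_nhds
  · -- part (2)
    intro γ hγ0 hγ1
    obtain ⟨M, hM0, hM⟩ := BBaux.holder_core C₁ C₂ γ hγ0 hγ1
    refine ⟨Metric.ball 0 (1/8), Metric.ball_mem_nhds _ (by norm_num), M, ?_⟩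
    intro z hz z' hz'
    have hnz : ‖z‖ < 1/8 := by
      have := hz.1; simpa [Metric.mem_ball, dist_eq_norm] using this
    have hnz' : ‖z'‖ < 1/8 := by
      have := hz'.1; simpa [Metric.mem_ball, dist_eq_norm] using this
    have hez : BBaux.eN z ≤ 1/2 := by
      have := BBaux.eN_le_two_norm z; linarith
    have hez' : BBaux.eN z' ≤ 1/2 := by
      have := BBaux.eN_le_two_norm z'; linarith
    rcases le_total (BBaux.eN z') (BBaux.eN z) with hcase | hcase
    · calc ‖u z - u z'‖
          = ‖BBaux.gg C₁ C₂ z • z - BBaux.gg C₁ C₂ z' • z'‖ := by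
            rw [huF]; exact BBaux.norm_uF_sub C₁ C₂ z z'
      _ ≤ M * ‖z - z'‖ ^ γ := hM z z' hez hcase
    · calc ‖u z - u z'‖ = ‖u z' - u z‖ := norm_sub_rev _ _
      _ = ‖BBaux.gg C₁ C₂ z' • z' - BBaux.gg C₁ C₂ z • z‖ := by
            rw [huF]; exact BBaux.norm_uF_sub C₁ C₂ z' z
      _ ≤ M * ‖z' - z‖ ^ γ := hM z' z hez' hcase
      _ = M * ‖z - z'‖ ^ γ := by rw [norm_sub_rev]
  · -- part (3a)
    intro r θ hr hθ1 hθ2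
    have hsum : (r*cos θ)^2 + (r*sin θ)^2 = r^2 := by
      have h := Real.sin_sq_add_cos_sq θ
      nlinarith [h]
    have hne : (r*cos θ)^2 + (r*sin θ)^2 ≠ 0 := by
      rw [hsum]; exact pow_ne_zero 2 hr.ne'
    obtain ⟨L, hL, hval⟩ := BBaux.deriv_comp1 C₁ C₂ (r*cos θ) (r*sin θ) hne
    have hfun1 : (fun w => (u w).1) =
        (fun w : ℝ × ℝ => (C₁ + C₂ * Real.log (Real.sqrt (w.1^2 + w.2^2))) * (-w.2)) :=
      funext fun w => by rw [hu]
    show fderiv ℝ (fun w => (u w).1) (r * cos θ, r * sin θ) (0, 1) = _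
    rw [hfun1, hL.fderiv, hval]
    have hsqrt : Real.sqrt ((r*cos θ)^2 + (r*sin θ)^2) = r := by
      rw [hsum]; exact Real.sqrt_sq hr.le
    have hy2 : (r*sin θ)^2/((r*cos θ)^2 + (r*sin θ)^2) = (sin θ)^2 := by
      rw [hsum]
      have h1 : (r*sin θ)^2 = (sin θ)^2 * r^2 := by ring
      rw [h1, mul_div_assoc, div_self (pow_ne_zero 2 hr.ne'), mul_one]
    rw [hsqrt, hy2]
  · -- part (3b)
    intro M ε hε
    have hθa : α < (α+β)/2 := by linarith
    have hθb : (α+β)/2 < β := by linarith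
    set θ0 := (α+β)/2 with hθ0def
    have hC2 : 0 < |C₂| := abs_pos.2 hC₂
    set t := (|M| + |C₁| + |C₂| + 1)/|C₂| with htdef
    have ht : 0 < t := by positivity
    set r := min (ε/2) (Real.exp (-t)) with hrdef
    have hr : 0 < r := lt_min (by linarith) (Real.exp_pos _)
    refine ⟨(r * cos θ0, r * sin θ0), ⟨r, θ0, hr, hθa, hθb, rfl⟩, ?_, ?_⟩
    · rw [Prod.norm_def]
      have h1 : ‖r * cos θ0‖ ≤ r := by
        rw [Real.norm_eq_abs, abs_mul, abs_of_pos hr]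
        nlinarith [Real.abs_cos_le_one θ0]
      have h2 : ‖r * sin θ0‖ ≤ r := by
        rw [Real.norm_eq_abs, abs_mul, abs_of_pos hr]
        nlinarith [Real.abs_sin_le_one θ0]
      have h3 : r < ε := lt_of_le_of_lt (min_le_left _ _) (by linarith)
      exact max_lt (lt_of_le_of_lt h1 h3) (lt_of_le_of_lt h2 h3)
    · have hsum : (r*cos θ0)^2 + (r*sin θ0)^2 = r^2 := by
        have h := Real.sin_sq_add_cos_sq θ0
        nlinarith [h]
      have hne : (r*cos θ0)^2 + (r*sin θ0)^2 ≠ 0 := by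
        rw [hsum]; exact pow_ne_zero 2 hr.ne'
      obtain ⟨L₁, hL₁, hval⟩ := BBaux.deriv_comp1 C₁ C₂ (r*cos θ0) (r*sin θ0) hne
      obtain ⟨L₂, hL₂⟩ := BBaux.deriv_comp2 C₁ C₂ (r*cos θ0) (r*sin θ0) hne
      have hufun : u = fun w : ℝ × ℝ =>
          ((C₁ + C₂ * Real.log (Real.sqrt (w.1^2 + w.2^2))) * (-w.2),
           (C₁ + C₂ * Real.log (Real.sqrt (w.1^2 + w.2^2))) * w.1) := funext hu
      have hDu : HasFDerivAt u (L₁.prod L₂) (r*cos θ0, r*sin θ0) := by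
        rw [hufun]; exact hL₁.prodMk hL₂
      rw [hDu.fderiv]
      -- simplify the value of L₁ (0,1)
      have hsqrt : Real.sqrt ((r*cos θ0)^2 + (r*sin θ0)^2) = r := by
        rw [hsum]; exact Real.sqrt_sq hr.le
      have hy2 : (r*sin θ0)^2/((r*cos θ0)^2 + (r*sin θ0)^2) = (sin θ0)^2 := by
        rw [hsum]
        have h1 : (r*sin θ0)^2 = (sin θ0)^2 * r^2 := by ring
        rw [h1, mul_div_assoc, div_self (pow_ne_zero 2 hr.ne'), mul_one]
      rw [hsqrt, hy2] at hval
      set E : ℝ := (C₁ + C₂ * Real.log r) + C₂ * (sin θ0)^2 with hEdef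
      have hvalE : L₁ (0,1) = -E := hval
      -- log estimate
      have hlogr : Real.log r ≤ -t := by
        have h3 : r ≤ Real.exp (-t) := min_le_right _ _
        calc Real.log r ≤ Real.log (Real.exp (-t)) := Real.log_le_log hr h3
        _ = -t := Real.log_exp _
      have hlogneg : Real.log r ≤ 0 := by linarith
      have habs : |C₂ * Real.log r| = |C₂| * (-Real.log r) := by
        rw [abs_mul, abs_of_nonpos hlogneg]
      have h5 : |C₂| * t ≤ |C₂| * (-Real.log r) :=
        mul_le_mul_of_nonneg_left (by linarith) hC2.le
      have h6 : |C₂| * t = |M| + |C₁| + |C₂| + 1 := by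
        rw [htdef, mul_div_cancel₀ _ hC2.ne']
      have h7 : |C₂ * (sin θ0)^2| ≤ |C₂| := by
        rw [abs_mul, abs_of_nonneg (sq_nonneg (sin θ0))]
        nlinarith [Real.sin_sq_le_one θ0, abs_nonneg C₂]
      have h8 : |C₂ * Real.log r| ≤ |E| + |C₁ + C₂*(sin θ0)^2| := by
        have he : C₂ * Real.log r = E - (C₁ + C₂*(sin θ0)^2) := by rw [hEdef]; ring
        rw [he, sub_eq_add_neg]
        exact (abs_add_le _ _).trans (by rw [abs_neg])
      have h9 : |C₁ + C₂*(sin θ0)^2| ≤ |C₁| + |C₂| := (abs_add_le _ _).trans (by linarith)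
      have hENG : |M| + 1 ≤ |E| := by
        have := habs ▸ h8
        linarith
      have hML : M < |E| := by
        have := le_abs_self M
        linarith
      -- operator norm lower bound
      have hnorm01 : ‖((0,1) : ℝ × ℝ)‖ = 1 := by
        rw [Prod.norm_def]; norm_num
      have hop : ‖(L₁.prod L₂) (0,1)‖ ≤ ‖L₁.prod L₂‖ := by
        have := (L₁.prod L₂).le_opNorm (0,1)
        rwa [hnorm01, mul_one] at this
      have hfst : |L₁ (0,1)| ≤ ‖(L₁.prod L₂) (0,1)‖ := by
        have := norm_fst_le ((L₁.prod L₂) (0,1))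
        simpa [ContinuousLinearMap.prod_apply, Real.norm_eq_abs] using this
      have hLE : |L₁ (0,1)| = |E| := by rw [hvalE, abs_neg]
      linarith [hLE ▸ hfst]
end

section
/- Let C₁, C₂, C₃, C₄, C₅ ∈ ℝ satisfy the constraints C₁C₃ + C₂C₄ − 2C₁C₂ = 0 and C₁C₄ − C₂C₃ + C₁² − C₂² = 0. Define on ℝ² the velocity u(x, y) = ((C₂+C₃)x² + (3C₂−C₃)y² + 2(C₁+C₄)xy, (C₄−3C₁)x² − (C₁+C₄)y² − 2(C₂+C₃)xy) and the pressure p(x, y) = (1/2)(C₁² + C₂² − C₃² − C₄²)(x² + y²)² + 8C₂x − 8C₁y + C₅. Then (u, p) solves the 2D steady incompressible Navier–Stokes equations −Δu + (u·∇)u + ∇p = 0, div u = 0 on all of ℝ². -/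
open Real Set

/-- Partial derivative in the first coordinate direction. -/
noncomputable def pdx (f : ℝ × ℝ → ℝ) (z : ℝ × ℝ) : ℝ := fderiv ℝ f z (1, 0)

/-- The 2D steady incompressible Navier--Stokes equations
`-Δu + (u·∇)u + ∇p = 0`, `div u = 0` on `Ω`. -/
def SteadyNS (u₁ u₂ p : ℝ × ℝ → ℝ) (Ω : Set (ℝ × ℝ)) : Prop :=
  ∀ z ∈ Ω,
    -(pdx (pdx u₁) z + pdy (pdy u₁) z)
        + (u₁ z * pdx u₁ z + u₂ z * pdy u₁ z) + pdx p z = 0 ∧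
    -(pdx (pdx u₂) z + pdy (pdy u₂) z)
        + (u₁ z * pdx u₂ z + u₂ z * pdy u₂ z) + pdy p z = 0 ∧
    pdx u₁ z + pdy u₂ z = 0


lemma pdx_eq {f : ℝ × ℝ → ℝ} {D : ℝ × ℝ →L[ℝ] ℝ} {z : ℝ × ℝ}
    (hf : HasFDerivAt f D z) : pdx f z = D (1, 0) := by rw [pdx, hf.fderiv]
lemma pdy_eq {f : ℝ × ℝ → ℝ} {D : ℝ × ℝ →L[ℝ] ℝ} {z : ℝ × ℝ}
    (hf : HasFDerivAt f D z) : pdy f z = D (0, 1) := by rw [pdy, hf.fderiv]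

section
variable (a b c k d e m : ℝ) (z : ℝ × ℝ)

private lemma hD : HasFDerivAt (fun w : ℝ × ℝ => a * w.1 ^ 2 + b * w.2 ^ 2 + c * w.1 * w.2)
    (a • (z.1 • ContinuousLinearMap.fst ℝ ℝ ℝ + z.1 • ContinuousLinearMap.fst ℝ ℝ ℝ) +
        b • (z.2 • ContinuousLinearMap.snd ℝ ℝ ℝ + z.2 • ContinuousLinearMap.snd ℝ ℝ ℝ) +
      c • (z.1 • ContinuousLinearMap.snd ℝ ℝ ℝ + z.2 • ContinuousLinearMap.fst ℝ ℝ ℝ)) z := by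
  have h1 : HasFDerivAt (fun w : ℝ × ℝ => w.1) (ContinuousLinearMap.fst ℝ ℝ ℝ) z := hasFDerivAt_fst
  have h2 : HasFDerivAt (fun w : ℝ × ℝ => w.2) (ContinuousLinearMap.snd ℝ ℝ ℝ) z := hasFDerivAt_snd
  exact (((((h1.mul h1).const_mul a).add ((h2.mul h2).const_mul b)).add
    (((h1.mul h2).const_mul c)))).congr_of_eventuallyEq
    (Filter.Eventually.of_forall fun w => by simp only [Pi.add_apply, Pi.mul_apply]; ring)

lemma quad_pdx : pdx (fun w : ℝ × ℝ => a * w.1 ^ 2 + b * w.2 ^ 2 + c * w.1 * w.2) z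
    = 2 * a * z.1 + c * z.2 := by
  rw [pdx_eq (hD a b c z)]; simp; ring

lemma quad_pdy : pdy (fun w : ℝ × ℝ => a * w.1 ^ 2 + b * w.2 ^ 2 + c * w.1 * w.2) z
    = 2 * b * z.2 + c * z.1 := by
  rw [pdy_eq (hD a b c z)]; simp; ring

private lemma hL : HasFDerivAt (fun w : ℝ × ℝ => a * w.1 + b * w.2)
    (a • ContinuousLinearMap.fst ℝ ℝ ℝ + b • ContinuousLinearMap.snd ℝ ℝ ℝ) z := by
  exact (hasFDerivAt_fst.const_mul a).add (hasFDerivAt_snd.const_mul b)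

lemma lin_pdx : pdx (fun w : ℝ × ℝ => a * w.1 + b * w.2) z = a := by
  rw [pdx_eq (hL a b z)]; simp
lemma lin_pdy : pdy (fun w : ℝ × ℝ => a * w.1 + b * w.2) z = b := by
  rw [pdy_eq (hL a b z)]; simp

private lemma hP : HasFDerivAt
    (fun w : ℝ × ℝ => k * (w.1 ^ 2 + w.2 ^ 2) ^ 2 + d * w.1 + e * w.2 + m)
    (k • ((z.1^2 + z.2^2) • (z.1 • ContinuousLinearMap.fst ℝ ℝ ℝ + z.1 • ContinuousLinearMap.fst ℝ ℝ ℝ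
        + (z.2 • ContinuousLinearMap.snd ℝ ℝ ℝ + z.2 • ContinuousLinearMap.snd ℝ ℝ ℝ))
      + (z.1^2 + z.2^2) • (z.1 • ContinuousLinearMap.fst ℝ ℝ ℝ + z.1 • ContinuousLinearMap.fst ℝ ℝ ℝ
        + (z.2 • ContinuousLinearMap.snd ℝ ℝ ℝ + z.2 • ContinuousLinearMap.snd ℝ ℝ ℝ)))
      + d • ContinuousLinearMap.fst ℝ ℝ ℝ + e • ContinuousLinearMap.snd ℝ ℝ ℝ) z := by
  have h1 : HasFDerivAt (fun w : ℝ × ℝ => w.1) (ContinuousLinearMap.fst ℝ ℝ ℝ) z := hasFDerivAt_fst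
  have h2 : HasFDerivAt (fun w : ℝ × ℝ => w.2) (ContinuousLinearMap.snd ℝ ℝ ℝ) z := hasFDerivAt_snd
  have hq : HasFDerivAt (fun w : ℝ × ℝ => w.1 * w.1 + w.2 * w.2)
      (z.1 • ContinuousLinearMap.fst ℝ ℝ ℝ + z.1 • ContinuousLinearMap.fst ℝ ℝ ℝ
        + (z.2 • ContinuousLinearMap.snd ℝ ℝ ℝ + z.2 • ContinuousLinearMap.snd ℝ ℝ ℝ)) z :=
    (h1.mul h1).add (h2.mul h2)
  have h := ((((hq.mul hq).const_mul k).add (h1.const_mul d)).add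
    (h2.const_mul e)).add_const m
  refine h.congr_of_eventuallyEq (Filter.Eventually.of_forall fun w => by simp only [Pi.add_apply, Pi.mul_apply]; ring) |>.congr_fderiv ?_
  congr 2
  · congr 2 <;> simp [pow_two]

lemma pquad_pdx : pdx (fun w : ℝ × ℝ => k * (w.1 ^ 2 + w.2 ^ 2) ^ 2 + d * w.1 + e * w.2 + m) z
    = 4 * k * z.1 * (z.1 ^ 2 + z.2 ^ 2) + d := by
  rw [pdx_eq (hP k d e m z)]; simp; ring

lemma pquad_pdy : pdy (fun w : ℝ × ℝ => k * (w.1 ^ 2 + w.2 ^ 2) ^ 2 + d * w.1 + e * w.2 + m) z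
    = 4 * k * z.2 * (z.1 ^ 2 + z.2 ^ 2) + e := by
  rw [pdy_eq (hP k d e m z)]; simp; ring

lemma quad_pdx_pdx : pdx (pdx (fun w : ℝ × ℝ => a * w.1 ^ 2 + b * w.2 ^ 2 + c * w.1 * w.2)) z
    = 2 * a := by
  rw [show pdx (fun w : ℝ × ℝ => a * w.1 ^ 2 + b * w.2 ^ 2 + c * w.1 * w.2)
      = fun z : ℝ × ℝ => 2 * a * z.1 + c * z.2 from funext (quad_pdx a b c), lin_pdx]

lemma quad_pdy_pdy : pdy (pdy (fun w : ℝ × ℝ => a * w.1 ^ 2 + b * w.2 ^ 2 + c * w.1 * w.2)) z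
    = 2 * b := by
  rw [show pdy (fun w : ℝ × ℝ => a * w.1 ^ 2 + b * w.2 ^ 2 + c * w.1 * w.2)
      = fun z : ℝ × ℝ => c * z.1 + 2 * b * z.2 from funext fun z => by rw [quad_pdy]; ring, lin_pdy]

end

/-- The constrained quadratic field with its pressure solves the 2D steady
Navier--Stokes equations on all of `ℝ²`. -/
theorem quadratic_solution (C₁ C₂ C₃ C₄ C₅ : ℝ)
    (h1 : C₁ * C₃ + C₂ * C₄ - 2 * C₁ * C₂ = 0)
    (h2 : C₁ * C₄ - C₂ * C₃ + C₁^2 - C₂^2 = 0) :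
    SteadyNS
      (fun z => (C₂ + C₃) * z.1^2 + (3 * C₂ - C₃) * z.2^2
          + 2 * (C₁ + C₄) * z.1 * z.2)
      (fun z => (C₄ - 3 * C₁) * z.1^2 - (C₁ + C₄) * z.2^2
          - 2 * (C₂ + C₃) * z.1 * z.2)
      (fun z => (1/2) * (C₁^2 + C₂^2 - C₃^2 - C₄^2) * (z.1^2 + z.2^2)^2
          + 8 * C₂ * z.1 - 8 * C₁ * z.2 + C₅)
      Set.univ := by
  
  intro z _
  rw [show (fun z : ℝ × ℝ => (C₄ - 3 * C₁) * z.1^2 - (C₁ + C₄) * z.2^2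
          - 2 * (C₂ + C₃) * z.1 * z.2)
      = fun w : ℝ × ℝ => (C₄ - 3 * C₁) * w.1 ^ 2 + (-(C₁ + C₄)) * w.2 ^ 2
          + (-(2 * (C₂ + C₃))) * w.1 * w.2 from funext fun w => by ring,
    show (fun z : ℝ × ℝ => (1/2) * (C₁^2 + C₂^2 - C₃^2 - C₄^2) * (z.1^2 + z.2^2)^2
          + 8 * C₂ * z.1 - 8 * C₁ * z.2 + C₅)
      = fun w : ℝ × ℝ => ((1/2) * (C₁^2 + C₂^2 - C₃^2 - C₄^2)) * (w.1 ^ 2 + w.2 ^ 2) ^ 2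
          + (8 * C₂) * w.1 + (-(8 * C₁)) * w.2 + C₅ from funext fun w => by ring]
  refine ⟨?_, ?_, ?_⟩ <;>
    simp only [quad_pdx, quad_pdy, quad_pdx_pdx, quad_pdy_pdy, pquad_pdx, pquad_pdy]
  · linear_combination (8 * z.1 ^ 2 * z.2) * h1 + (4 * z.1 * z.2 ^ 2 - 4 * z.1 ^ 3) * h2
  · linear_combination (8 * z.1 * z.2 ^ 2) * h1 + (4 * z.2 ^ 3 - 4 * z.1 ^ 2 * z.2) * h2
  · ring
end

section
/- Let λ > 0 and C₁, C₂, C₃ ∈ ℝ, and let Ω be a cone domain {(r cos θ, r sin θ) : α < θ < β, 0 < r < ∞} with 0 ≤ α < β ≤ 2π (or Ω = ℝ² \ {0} when λ is a positive integer). Define in polar coordinates u = r^λ·(C₁cos(λθ) + C₂sin(λθ), C₂cos(λθ) − C₁sin(λθ)) and p = −(1/2)(C₁² + C₂²) r^{2λ} + C₃. Then (u, p) solves the 2D steady incompressible Navier–Stokes equations −Δu + (u·∇)u + ∇p = 0, div u = 0 on Ω; moreover this u has identically vanishing vorticity ∂₂u₁ − ∂₁u₂ = 0 on Ω. -/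
open Real Set

open Filter Topology

/-- The ℝ-linear inclusion ℝ×ℝ → ℂ. -/
noncomputable def cmk : ℝ × ℝ →L[ℝ] ℂ := (Complex.equivRealProdCLM.symm : (ℝ×ℝ) ≃L[ℝ] ℂ)

lemma cmk_apply (z : ℝ × ℝ) : cmk z = z.1 + z.2 * Complex.I := by
  simp [cmk, Complex.ext_iff]

lemma hasFDerivAt_comp_cmk {f : ℂ → ℂ} {d : ℂ} {z : ℝ × ℝ}
    (hf : HasDerivAt f d (z.1 + z.2 * Complex.I)) :
    HasFDerivAt (fun y : ℝ × ℝ => f (y.1 + y.2 * Complex.I))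
      ((((1 : ℂ →L[ℂ] ℂ).smulRight d).restrictScalars ℝ).comp cmk) z := by
  have h1 : HasFDerivAt f (((1 : ℂ →L[ℂ] ℂ).smulRight d).restrictScalars ℝ) (cmk z) := by
    rw [cmk_apply]; exact hf.hasFDerivAt.restrictScalars ℝ
  have h2 : HasFDerivAt (fun y : ℝ × ℝ => f (cmk y))
      ((((1 : ℂ →L[ℂ] ℂ).smulRight d).restrictScalars ℝ).comp cmk) z :=
    h1.comp z (cmk.hasFDerivAt)
  refine h2.congr_of_eventuallyEq (Eventually.of_forall fun y => ?_)
  simp [cmk_apply]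

lemma comp_cmk_basis1 (d : ℂ) :
    ((((1 : ℂ →L[ℂ] ℂ).smulRight d).restrictScalars ℝ).comp cmk) (1,0) = d := by
  simp [cmk_apply]

lemma comp_cmk_basis2 (d : ℂ) :
    ((((1 : ℂ →L[ℂ] ℂ).smulRight d).restrictScalars ℝ).comp cmk) (0,1) = Complex.I * d := by
  simp [cmk_apply]

lemma hasFDerivAt_re_comp {f : ℂ → ℂ} {d : ℂ} {z : ℝ × ℝ}
    (hf : HasDerivAt f d (z.1 + z.2 * Complex.I)) :
    HasFDerivAt (fun y : ℝ × ℝ => (f (y.1 + y.2 * Complex.I)).re)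
      (Complex.reCLM.comp ((((1 : ℂ →L[ℂ] ℂ).smulRight d).restrictScalars ℝ).comp cmk)) z :=
  (Complex.reCLM.hasFDerivAt).comp z (hasFDerivAt_comp_cmk hf)

lemma hasFDerivAt_im_comp {f : ℂ → ℂ} {d : ℂ} {z : ℝ × ℝ}
    (hf : HasDerivAt f d (z.1 + z.2 * Complex.I)) :
    HasFDerivAt (fun y : ℝ × ℝ => (f (y.1 + y.2 * Complex.I)).im)
      (Complex.imCLM.comp ((((1 : ℂ →L[ℂ] ℂ).smulRight d).restrictScalars ℝ).comp cmk)) z :=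
  (Complex.imCLM.hasFDerivAt).comp z (hasFDerivAt_comp_cmk hf)

lemma pdx_re_comp {f : ℂ → ℂ} {d : ℂ} {z : ℝ × ℝ}
    (hf : HasDerivAt f d (z.1 + z.2 * Complex.I)) :
    pdx (fun y : ℝ × ℝ => (f (y.1 + y.2 * Complex.I)).re) z = d.re := by
  rw [pdx, (hasFDerivAt_re_comp hf).fderiv]
  simp [cmk_apply]

lemma pdy_re_comp {f : ℂ → ℂ} {d : ℂ} {z : ℝ × ℝ}
    (hf : HasDerivAt f d (z.1 + z.2 * Complex.I)) :
    pdy (fun y : ℝ × ℝ => (f (y.1 + y.2 * Complex.I)).re) z = -d.im := by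
  rw [pdy, (hasFDerivAt_re_comp hf).fderiv]
  simp [cmk_apply]

lemma pdx_im_comp {f : ℂ → ℂ} {d : ℂ} {z : ℝ × ℝ}
    (hf : HasDerivAt f d (z.1 + z.2 * Complex.I)) :
    pdx (fun y : ℝ × ℝ => (f (y.1 + y.2 * Complex.I)).im) z = d.im := by
  rw [pdx, (hasFDerivAt_im_comp hf).fderiv]
  simp [cmk_apply]

lemma pdy_im_comp {f : ℂ → ℂ} {d : ℂ} {z : ℝ × ℝ}
    (hf : HasDerivAt f d (z.1 + z.2 * Complex.I)) :
    pdy (fun y : ℝ × ℝ => (f (y.1 + y.2 * Complex.I)).im) z = d.re := by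
  rw [pdy, (hasFDerivAt_im_comp hf).fderiv]
  simp [cmk_apply]

lemma pdx_congr {f g : ℝ × ℝ → ℝ} {z : ℝ × ℝ} (h : f =ᶠ[𝓝 z] g) : pdx f z = pdx g z := by
  rw [pdx, pdx, h.fderiv_eq]

lemma pdy_congr {f g : ℝ × ℝ → ℝ} {z : ℝ × ℝ} (h : f =ᶠ[𝓝 z] g) : pdy f z = pdy g z := by
  rw [pdy, pdy, h.fderiv_eq]

open Complex in
lemma NS_local (C₃ : ℝ) (u₁ u₂ p : ℝ × ℝ → ℝ) (w : ℂ → ℂ) (V : Set ℂ) (hV : IsOpen V)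
    (hw : DifferentiableOn ℂ w V) (z₀ : ℝ × ℝ) (hz₀ : (z₀.1 : ℂ) + z₀.2 * Complex.I ∈ V)
    (h1 : ∀ᶠ z in 𝓝 z₀, u₁ z = (w (z.1 + z.2 * Complex.I)).re)
    (h2 : ∀ᶠ z in 𝓝 z₀, u₂ z = -(w (z.1 + z.2 * Complex.I)).im)
    (h3 : ∀ᶠ z in 𝓝 z₀, p z = -(1/2) * ((w (z.1 + z.2 * Complex.I)).re ^ 2
            + (w (z.1 + z.2 * Complex.I)).im ^ 2) + C₃) :
    (-(pdx (pdx u₁) z₀ + pdy (pdy u₁) z₀)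
        + (u₁ z₀ * pdx u₁ z₀ + u₂ z₀ * pdy u₁ z₀) + pdx p z₀ = 0 ∧
    -(pdx (pdx u₂) z₀ + pdy (pdy u₂) z₀)
        + (u₁ z₀ * pdx u₂ z₀ + u₂ z₀ * pdy u₂ z₀) + pdy p z₀ = 0 ∧
    pdx u₁ z₀ + pdy u₂ z₀ = 0) ∧ pdy u₁ z₀ - pdx u₂ z₀ = 0 := by
  have hmkc : Continuous (fun z : ℝ × ℝ => (z.1 : ℂ) + z.2 * Complex.I) := by
    have := cmk.continuous
    simpa [funext cmk_apply] using this
  set c₀ : ℂ := (z₀.1 : ℂ) + z₀.2 * Complex.I with hc₀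
  have hwa : AnalyticOnNhd ℂ w V := hw.analyticOnNhd hV
  have hdw : ∀ z : ℝ × ℝ, ((z.1 : ℂ) + z.2 * Complex.I) ∈ V →
      HasDerivAt w (deriv w ((z.1 : ℂ) + z.2 * Complex.I)) ((z.1 : ℂ) + z.2 * Complex.I) :=
    fun z hz => ((hwa _ hz).differentiableAt).hasDerivAt
  have hdw1 : HasDerivAt w (deriv w c₀) c₀ := hdw z₀ hz₀
  have hdw2 : HasDerivAt (deriv w) (deriv (deriv w) c₀) c₀ :=
    ((hwa.deriv _ hz₀).differentiableAt).hasDerivAt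
  set d₁ : ℂ := deriv w c₀ with hd₁
  set d₂ : ℂ := deriv (deriv w) c₀ with hd₂
  have hevV : ∀ᶠ z in 𝓝 z₀, ((z.1 : ℂ) + z.2 * Complex.I) ∈ V :=
    hmkc.continuousAt.preimage_mem_nhds (hV.mem_nhds hz₀)
  -- first derivatives, eventually
  have A1 : pdx u₁ =ᶠ[𝓝 z₀] fun z => (deriv w ((z.1 : ℂ) + z.2 * Complex.I)).re := by
    filter_upwards [eventually_eventually_nhds.mpr h1, hevV] with z hz hzV
    rw [pdx_congr hz, pdx_re_comp (hdw z hzV)]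
  have A2 : pdy u₁ =ᶠ[𝓝 z₀]
      fun z => ((fun c => -(deriv w c)) ((z.1 : ℂ) + z.2 * Complex.I)).im := by
    filter_upwards [eventually_eventually_nhds.mpr h1, hevV] with z hz hzV
    rw [pdy_congr hz, pdy_re_comp (hdw z hzV)]; simp
  have h2' : ∀ᶠ z in 𝓝 z₀, u₂ z = ((fun c => -(w c)) ((z.1 : ℂ) + z.2 * Complex.I)).im := by
    filter_upwards [h2] with z hz; simpa using hz
  have A3 : pdx u₂ =ᶠ[𝓝 z₀]
      fun z => ((fun c => -(deriv w c)) ((z.1 : ℂ) + z.2 * Complex.I)).im := by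
    filter_upwards [eventually_eventually_nhds.mpr h2', hevV] with z hz hzV
    rw [pdx_congr hz, pdx_im_comp (f := fun c => -(w c)) ((hdw z hzV).neg)]
  have A4 : pdy u₂ =ᶠ[𝓝 z₀]
      fun z => ((fun c => -(deriv w c)) ((z.1 : ℂ) + z.2 * Complex.I)).re := by
    filter_upwards [eventually_eventually_nhds.mpr h2', hevV] with z hz hzV
    rw [pdy_congr hz, pdy_im_comp (f := fun c => -(w c)) ((hdw z hzV).neg)]
  -- first derivative values at z₀
  have e1 : pdx u₁ z₀ = d₁.re := A1.self_of_nhds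
  have e2 : pdy u₁ z₀ = -d₁.im := by simpa using A2.self_of_nhds
  have e3 : pdx u₂ z₀ = -d₁.im := by simpa using A3.self_of_nhds
  have e4 : pdy u₂ z₀ = -d₁.re := by simpa using A4.self_of_nhds
  have v1 : u₁ z₀ = (w c₀).re := h1.self_of_nhds
  have v2 : u₂ z₀ = -(w c₀).im := h2.self_of_nhds
  -- second derivatives
  have s1 : pdx (pdx u₁) z₀ = d₂.re := by
    rw [pdx_congr A1, pdx_re_comp hdw2]
  have s2 : pdy (pdy u₁) z₀ = -d₂.re := by
    rw [pdy_congr A2, pdy_im_comp (f := fun c => -(deriv w c)) hdw2.neg]; simp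
  have s3 : pdx (pdx u₂) z₀ = -d₂.im := by
    rw [pdx_congr A3, pdx_im_comp (f := fun c => -(deriv w c)) hdw2.neg]; simp
  have s4 : pdy (pdy u₂) z₀ = d₂.im := by
    rw [pdy_congr A4, pdy_re_comp (f := fun c => -(deriv w c)) hdw2.neg]; simp
  -- pressure derivatives
  have hA : HasFDerivAt (fun z : ℝ × ℝ => (w ((z.1 : ℂ) + z.2 * Complex.I)).re)
      (Complex.reCLM.comp ((((1 : ℂ →L[ℂ] ℂ).smulRight d₁).restrictScalars ℝ).comp cmk)) z₀ :=
    hasFDerivAt_re_comp hdw1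
  have hB : HasFDerivAt (fun z : ℝ × ℝ => (w ((z.1 : ℂ) + z.2 * Complex.I)).im)
      (Complex.imCLM.comp ((((1 : ℂ →L[ℂ] ℂ).smulRight d₁).restrictScalars ℝ).comp cmk)) z₀ :=
    hasFDerivAt_im_comp hdw1
  have h3' : ∀ᶠ z in 𝓝 z₀, p z = -(1/2) * ((w ((z.1 : ℂ) + z.2 * Complex.I)).re
        * (w ((z.1 : ℂ) + z.2 * Complex.I)).re
      + (w ((z.1 : ℂ) + z.2 * Complex.I)).im * (w ((z.1 : ℂ) + z.2 * Complex.I)).im) + C₃ := by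
    filter_upwards [h3] with z hz; rw [hz]; ring
  have hP := (((hA.mul hA).add (hB.mul hB)).const_mul (-(1/2) : ℝ)).add_const C₃
  simp only [Pi.mul_apply, Pi.add_apply] at hP
  have p1 : pdx p z₀ = -(1/2) * (2 * (w c₀).re * d₁.re + 2 * (w c₀).im * d₁.im) := by
    rw [pdx_congr h3', pdx, hP.fderiv]
    simp [cmk_apply]
    ring
  have p2 : pdy p z₀ = -(1/2) * (2 * (w c₀).re * (-d₁.im) + 2 * (w c₀).im * d₁.re) := by
    rw [pdy_congr h3', pdy, hP.fderiv]
    simp [cmk_apply]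
    ring
  refine ⟨⟨?_, ?_, ?_⟩, ?_⟩ <;>
    simp only [s1, s2, s3, s4, e1, e2, e3, e4, v1, v2, p1, p2] <;> ring

open Complex in
lemma abs_c0 {r₀ : ℝ} (hr₀ : 0 ≤ r₀) (θ₀ : ℝ) :
    ‖(r₀ : ℂ) * Complex.exp ((θ₀ : ℂ) * Complex.I)‖ = r₀ := by
  simp [Complex.norm_exp, _root_.abs_of_nonneg hr₀]

open Complex in
lemma c0_ne {r₀ : ℝ} (hr₀ : 0 < r₀) (θ₀ : ℝ) :
    ((r₀ : ℂ) * Complex.exp ((θ₀ : ℂ) * Complex.I)) ≠ 0 := by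
  intro h
  have := abs_c0 hr₀.le θ₀
  rw [h] at this
  simp at this
  linarith

open Complex in
lemma mk_c0 (r₀ θ₀ : ℝ) :
    ((r₀ * Real.cos θ₀ : ℝ) : ℂ) + ((r₀ * Real.sin θ₀ : ℝ) : ℂ) * Complex.I
      = (r₀ : ℂ) * Complex.exp ((θ₀ : ℂ) * Complex.I) := by
  rw [Complex.exp_mul_I]
  push_cast [← Complex.ofReal_cos, ← Complex.ofReal_sin]
  ring

open Complex in
lemma polar_rep {r₀ : ℝ} (hr₀ : 0 < r₀) (θ₀ : ℝ) {c : ℂ} (hc : c ≠ 0) :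
    c = ((‖c‖ : ℝ) : ℂ) * Complex.exp
      (((θ₀ + Complex.arg (c / ((r₀ : ℂ) * Complex.exp ((θ₀ : ℂ) * Complex.I))) : ℝ) : ℂ)
        * Complex.I) := by
  set c₀ : ℂ := (r₀ : ℂ) * Complex.exp ((θ₀ : ℂ) * Complex.I) with hc₀def
  have hc₀ : c₀ ≠ 0 := c0_ne hr₀ θ₀
  have h1 : c = c₀ * (c / c₀) := by field_simp
  have h2 : (↑(‖c / c₀‖) : ℂ) * Complex.exp ((Complex.arg (c / c₀) : ℂ) * Complex.I)
      = c / c₀ := Complex.norm_mul_exp_arg_mul_I _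
  have habs : ‖c / c₀‖ = ‖c‖ / r₀ := by
    rw [norm_div, abs_c0 hr₀.le]
  calc c = c₀ * (c / c₀) := h1
    _ = ((r₀ : ℂ) * Complex.exp ((θ₀ : ℂ) * Complex.I)) *
        ((↑(‖c / c₀‖) : ℝ) * Complex.exp ((Complex.arg (c / c₀) : ℂ) * Complex.I)) := by
        rw [h2, ← hc₀def]
    _ = ((r₀ * (‖c‖ / r₀) : ℝ) : ℂ) *
        Complex.exp ((θ₀ : ℂ) * Complex.I + (Complex.arg (c / c₀) : ℂ) * Complex.I) := by
        rw [habs, Complex.exp_add]; push_cast; ring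
    _ = _ := by
        rw [mul_div_cancel₀ _ (ne_of_gt hr₀)]
        push_cast
        ring_nf

open Complex in
lemma polar_rep_pair {r₀ : ℝ} (hr₀ : 0 < r₀) (θ₀ : ℝ) {z : ℝ × ℝ}
    (hz : ((z.1 : ℂ) + z.2 * Complex.I) ≠ 0) :
    z = (‖(z.1 : ℂ) + z.2 * Complex.I‖
          * Real.cos (θ₀ + Complex.arg (((z.1 : ℂ) + z.2 * Complex.I)
              / ((r₀ : ℂ) * Complex.exp ((θ₀ : ℂ) * Complex.I)))),
        ‖(z.1 : ℂ) + z.2 * Complex.I‖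
          * Real.sin (θ₀ + Complex.arg (((z.1 : ℂ) + z.2 * Complex.I)
              / ((r₀ : ℂ) * Complex.exp ((θ₀ : ℂ) * Complex.I))))) := by
  have h := polar_rep hr₀ θ₀ hz
  set R := ‖(z.1 : ℂ) + z.2 * Complex.I‖
  set Θ := θ₀ + Complex.arg (((z.1 : ℂ) + z.2 * Complex.I)
      / ((r₀ : ℂ) * Complex.exp ((θ₀ : ℂ) * Complex.I)))
  have h1 : ((z.1 : ℂ) + z.2 * Complex.I).re = R * Real.cos Θ := by
    rw [h]; rw [Complex.exp_mul_I]
    push_cast [← Complex.ofReal_cos, ← Complex.ofReal_sin]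
    simp [Complex.cos_ofReal_re]
  have h2 : ((z.1 : ℂ) + z.2 * Complex.I).im = R * Real.sin Θ := by
    rw [h]; rw [Complex.exp_mul_I]
    push_cast [← Complex.ofReal_cos, ← Complex.ofReal_sin]
    simp [Complex.sin_ofReal_re]
  simp only [Complex.add_re, Complex.add_im, Complex.ofReal_re, Complex.ofReal_im,
    Complex.mul_re, Complex.mul_im, Complex.I_re, Complex.I_im] at h1 h2
  ext <;> simp_all <;> linarith

open Complex in
lemma w_value {lam : ℝ} (C₁ C₂ : ℝ) {r₀ : ℝ} (θ₀ : ℝ) (hr₀ : 0 < r₀) {c : ℂ} (hc : c ≠ 0) :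
    ((C₁ : ℂ) - C₂ * Complex.I) * ((r₀ ^ lam : ℝ) : ℂ)
        * Complex.exp (((lam * θ₀ : ℝ) : ℂ) * Complex.I)
        * Complex.exp ((lam : ℂ) * Complex.log (c / ((r₀ : ℂ) * Complex.exp ((θ₀ : ℂ) * Complex.I))))
      = ((C₁ : ℂ) - C₂ * Complex.I) * ((‖c‖ ^ lam : ℝ) : ℂ)
        * Complex.exp (((lam * (θ₀ + Complex.arg (c / ((r₀ : ℂ)
            * Complex.exp ((θ₀ : ℂ) * Complex.I)))) : ℝ) : ℂ) * Complex.I) := by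
  set c₀ : ℂ := (r₀ : ℂ) * Complex.exp ((θ₀ : ℂ) * Complex.I) with hc₀def
  have habs : ‖c / c₀‖ = ‖c‖ / r₀ := by
    rw [norm_div, abs_c0 hr₀.le]
  have hρpos : 0 < ‖c / c₀‖ := by
    rw [habs]
    exact div_pos (by simpa using hc) hr₀
  have hlog : Complex.log (c / c₀)
      = ((Real.log (‖c / c₀‖) : ℝ) : ℂ) + (Complex.arg (c / c₀) : ℂ) * Complex.I := rfl
  have hexp : Complex.exp ((lam : ℂ) * Complex.log (c / c₀))
      = ((‖c / c₀‖ ^ lam : ℝ) : ℂ)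
        * Complex.exp (((lam * Complex.arg (c / c₀) : ℝ) : ℂ) * Complex.I) := by
    rw [hlog, mul_add, Complex.exp_add]
    congr 1
    · rw [← Complex.ofReal_mul, ← Complex.ofReal_exp]
      congr 1
      rw [Real.rpow_def_of_pos hρpos, mul_comm]
    · push_cast; ring_nf
  rw [hexp]
  have hr : (r₀ ^ lam : ℝ) * (‖c / c₀‖ ^ lam : ℝ) = ‖c‖ ^ lam := by
    rw [habs, Real.div_rpow (norm_nonneg c) hr₀.le]
    field_simp
  calc ((C₁ : ℂ) - C₂ * Complex.I) * ((r₀ ^ lam : ℝ) : ℂ)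
        * Complex.exp (((lam * θ₀ : ℝ) : ℂ) * Complex.I)
        * (((‖c / c₀‖ ^ lam : ℝ) : ℂ)
          * Complex.exp (((lam * Complex.arg (c / c₀) : ℝ) : ℂ) * Complex.I))
      = ((C₁ : ℂ) - C₂ * Complex.I) * (((r₀ ^ lam : ℝ) * (‖c / c₀‖ ^ lam : ℝ) : ℝ) : ℂ)
        * Complex.exp (((lam * θ₀ : ℝ) : ℂ) * Complex.I
            + ((lam * Complex.arg (c / c₀) : ℝ) : ℂ) * Complex.I) := by
        rw [Complex.exp_add]; push_cast; ring
    _ = _ := by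
        rw [hr]
        congr 2
        push_cast
        ring

open Complex in
lemma cval_re (C₁ C₂ s t : ℝ) :
    (((C₁ : ℂ) - C₂ * Complex.I) * ((s : ℝ) : ℂ) * Complex.exp ((t : ℂ) * Complex.I)).re
      = s * (C₁ * Real.cos t + C₂ * Real.sin t) := by
  rw [Complex.exp_mul_I]
  push_cast [← Complex.ofReal_cos, ← Complex.ofReal_sin]
  simp [Complex.mul_re, Complex.mul_im, Complex.cos_ofReal_re, Complex.sin_ofReal_re]
  ring

open Complex in
lemma cval_im (C₁ C₂ s t : ℝ) :
    (((C₁ : ℂ) - C₂ * Complex.I) * ((s : ℝ) : ℂ) * Complex.exp ((t : ℂ) * Complex.I)).im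
      = -(s * (C₂ * Real.cos t - C₁ * Real.sin t)) := by
  rw [Complex.exp_mul_I]
  push_cast [← Complex.ofReal_cos, ← Complex.ofReal_sin]
  simp [Complex.mul_re, Complex.mul_im, Complex.cos_ofReal_re, Complex.sin_ofReal_re]
  ring

open Complex in
lemma cval_sq (C₁ C₂ s t : ℝ) :
    (((C₁ : ℂ) - C₂ * Complex.I) * ((s : ℝ) : ℂ) * Complex.exp ((t : ℂ) * Complex.I)).re ^ 2
      + (((C₁ : ℂ) - C₂ * Complex.I) * ((s : ℝ) : ℂ) * Complex.exp ((t : ℂ) * Complex.I)).im ^ 2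
      = (C₁ ^ 2 + C₂ ^ 2) * (s ^ 2) := by
  rw [cval_re, cval_im]
  nlinarith [Real.sin_sq_add_cos_sq t]


/-- The irrotational field `u = r^λ (C₁cos λθ + C₂sin λθ, C₂cos λθ − C₁sin λθ)`
with pressure `p = −(1/2)(C₁² + C₂²) r^{2λ} + C₃` solves the 2D steady
Navier--Stokes equations on a cone domain (or on `ℝ² \ {0}` when `λ ∈ ℕ⁺`),
and its vorticity vanishes identically. -/
theorem power_solution (lam : ℝ) (hlam : 0 < lam) (C₁ C₂ C₃ : ℝ)
    (Ω : Set (ℝ × ℝ))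
    (hΩ : (∃ α β : ℝ, 0 ≤ α ∧ α < β ∧ β ≤ 2 * π ∧ Ω = coneDomain α β) ∨
      ((∃ n : ℕ, 0 < n ∧ lam = (n : ℝ)) ∧ Ω = {z : ℝ × ℝ | z ≠ 0}))
    (u₁ u₂ p : ℝ × ℝ → ℝ)
    (hu : ∀ r θ : ℝ, 0 < r → (r * cos θ, r * sin θ) ∈ Ω →
      u₁ (r * cos θ, r * sin θ)
          = r ^ lam * (C₁ * cos (lam * θ) + C₂ * sin (lam * θ)) ∧
      u₂ (r * cos θ, r * sin θ)
          = r ^ lam * (C₂ * cos (lam * θ) - C₁ * sin (lam * θ)) ∧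
      p (r * cos θ, r * sin θ)
          = -(1/2) * (C₁^2 + C₂^2) * r ^ (2 * lam) + C₃) :
    SteadyNS u₁ u₂ p Ω ∧ ∀ z ∈ Ω, pdy u₁ z - pdx u₂ z = 0 := by
  suffices H : ∀ z₀ ∈ Ω,
      (-(pdx (pdx u₁) z₀ + pdy (pdy u₁) z₀)
          + (u₁ z₀ * pdx u₁ z₀ + u₂ z₀ * pdy u₁ z₀) + pdx p z₀ = 0 ∧
      -(pdx (pdx u₂) z₀ + pdy (pdy u₂) z₀)
          + (u₁ z₀ * pdx u₂ z₀ + u₂ z₀ * pdy u₂ z₀) + pdy p z₀ = 0 ∧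
      pdx u₁ z₀ + pdy u₂ z₀ = 0) ∧ pdy u₁ z₀ - pdx u₂ z₀ = 0 by
    exact ⟨fun z hz => (H z hz).1, fun z hz => (H z hz).2⟩
  intro z₀ hz₀mem
  have hmkc : Continuous (fun z : ℝ × ℝ => (z.1 : ℂ) + z.2 * Complex.I) := by
    have := cmk.continuous
    simpa [funext cmk_apply] using this
  obtain ⟨r₀, θ₀, hr₀, hz₀eq, hev⟩ :
      ∃ r₀ θ₀ : ℝ, 0 < r₀ ∧ z₀ = (r₀ * Real.cos θ₀, r₀ * Real.sin θ₀) ∧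
        ∀ᶠ z in 𝓝 z₀, ((z.1 : ℂ) + z.2 * Complex.I) ≠ 0 ∧ z ∈ Ω ∧
          ((z.1 : ℂ) + z.2 * Complex.I) / ((r₀ : ℂ) * Complex.exp ((θ₀ : ℂ) * Complex.I))
            ∈ Complex.slitPlane := by
    rcases hΩ with ⟨α, β, hα0, hαβ, hβ2π, hΩeq⟩ | ⟨⟨n, hn, hlamn⟩, hΩeq⟩
    · -- cone case
      have hz₀mem' := hz₀mem
      rw [hΩeq] at hz₀mem'
      obtain ⟨r₀, θ₀, hr₀, hαθ, hθβ, hz₀eq⟩ := hz₀mem'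
      refine ⟨r₀, θ₀, hr₀, hz₀eq, ?_⟩
      set c₀ : ℂ := (r₀ : ℂ) * Complex.exp ((θ₀ : ℂ) * Complex.I) with hc₀def
      have hc₀ne : c₀ ≠ 0 := c0_ne hr₀ θ₀
      have hc0 : (z₀.1 : ℂ) + z₀.2 * Complex.I = c₀ := by
        rw [hz₀eq]; exact mk_c0 r₀ θ₀
      have hdivc : Continuous (fun z : ℝ × ℝ => ((z.1 : ℂ) + z.2 * Complex.I) / c₀) :=
        hmkc.div_const c₀
      have hdiv0 : ((z₀.1 : ℂ) + z₀.2 * Complex.I) / c₀ = 1 := by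
        rw [hc0, div_self hc₀ne]
      have ev_ne : ∀ᶠ z in 𝓝 z₀, ((z.1 : ℂ) + z.2 * Complex.I) ≠ 0 := by
        have : IsOpen {z : ℝ × ℝ | ((z.1 : ℂ) + z.2 * Complex.I) ≠ 0} :=
          isOpen_ne.preimage hmkc
        exact this.mem_nhds (by simp only [Set.mem_setOf_eq, hc0]; exact hc₀ne)
      have ev_slit : ∀ᶠ z in 𝓝 z₀,
          ((z.1 : ℂ) + z.2 * Complex.I) / c₀ ∈ Complex.slitPlane := by
        have : IsOpen {z : ℝ × ℝ | ((z.1 : ℂ) + z.2 * Complex.I) / c₀ ∈ Complex.slitPlane} :=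
          Complex.isOpen_slitPlane.preimage hdivc
        refine this.mem_nhds ?_
        simp only [Set.mem_setOf_eq, hdiv0]
        exact Complex.one_mem_slitPlane
      have ev_angle : ∀ᶠ z in 𝓝 z₀,
          θ₀ + Complex.arg (((z.1 : ℂ) + z.2 * Complex.I) / c₀) ∈ Set.Ioo α β := by
        have harg : ContinuousAt Complex.arg (((z₀.1 : ℂ) + z₀.2 * Complex.I) / c₀) := by
          rw [hdiv0]
          exact Complex.continuousAt_arg Complex.one_mem_slitPlane
        have hca : ContinuousAt
            (fun z : ℝ × ℝ => θ₀ + Complex.arg (((z.1 : ℂ) + z.2 * Complex.I) / c₀)) z₀ :=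
          continuousAt_const.add (ContinuousAt.comp (g := Complex.arg)
            (f := fun z : ℝ × ℝ => ((z.1 : ℂ) + z.2 * Complex.I) / c₀) harg hdivc.continuousAt)
        have hval : θ₀ + Complex.arg (((z₀.1 : ℂ) + z₀.2 * Complex.I) / c₀) = θ₀ := by
          rw [hdiv0]; simp
        refine hca.preimage_mem_nhds ?_
        rw [hval]
        exact isOpen_Ioo.mem_nhds ⟨hαθ, hθβ⟩
      filter_upwards [ev_ne, ev_slit, ev_angle] with z h1 h2 h3
      refine ⟨h1, ?_, h2⟩
      rw [hΩeq]
      exact ⟨‖(z.1 : ℂ) + z.2 * Complex.I‖,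
        θ₀ + Complex.arg (((z.1 : ℂ) + z.2 * Complex.I) / c₀),
        norm_pos_iff.mpr h1, h3.1, h3.2, polar_rep_pair hr₀ θ₀ h1⟩
    · -- punctured plane case
      have hz₀ne : z₀ ≠ 0 := by rw [hΩeq] at hz₀mem; exact hz₀mem
      have hne0 : ((z₀.1 : ℂ) + z₀.2 * Complex.I) ≠ 0 := by
        intro h
        apply hz₀ne
        have h' : z₀.1 = 0 ∧ z₀.2 = 0 := by
          constructor
          · simpa using congrArg Complex.re h
          · simpa using congrArg Complex.im h
        exact Prod.ext h'.1 h'.2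
      set r₀ : ℝ := ‖(z₀.1 : ℂ) + z₀.2 * Complex.I‖ with hr₀def
      set θ₀ : ℝ := Complex.arg ((z₀.1 : ℂ) + z₀.2 * Complex.I) with hθ₀def
      have hr₀ : 0 < r₀ := norm_pos_iff.mpr hne0
      have hc0 : (z₀.1 : ℂ) + z₀.2 * Complex.I = (r₀ : ℂ) * Complex.exp ((θ₀ : ℂ) * Complex.I) :=
        (Complex.norm_mul_exp_arg_mul_I _).symm
      have hz₀eq : z₀ = (r₀ * Real.cos θ₀, r₀ * Real.sin θ₀) := by
        have h := hc0.trans (mk_c0 r₀ θ₀).symm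
        have h1 : z₀.1 = r₀ * Real.cos θ₀ := by simpa [Complex.cos_ofReal_re] using congrArg Complex.re h
        have h2 : z₀.2 = r₀ * Real.sin θ₀ := by simpa [Complex.sin_ofReal_re] using congrArg Complex.im h
        exact Prod.ext h1 h2
      refine ⟨r₀, θ₀, hr₀, hz₀eq, ?_⟩
      set c₀ : ℂ := (r₀ : ℂ) * Complex.exp ((θ₀ : ℂ) * Complex.I) with hc₀def
      have hc₀ne : c₀ ≠ 0 := c0_ne hr₀ θ₀
      have hdivc : Continuous (fun z : ℝ × ℝ => ((z.1 : ℂ) + z.2 * Complex.I) / c₀) :=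
        hmkc.div_const c₀
      have hdiv0 : ((z₀.1 : ℂ) + z₀.2 * Complex.I) / c₀ = 1 := by
        rw [hc0, div_self hc₀ne]
      have ev_ne : ∀ᶠ z in 𝓝 z₀, ((z.1 : ℂ) + z.2 * Complex.I) ≠ 0 := by
        have : IsOpen {z : ℝ × ℝ | ((z.1 : ℂ) + z.2 * Complex.I) ≠ 0} :=
          isOpen_ne.preimage hmkc
        exact this.mem_nhds (by simpa using hne0)
      have ev_slit : ∀ᶠ z in 𝓝 z₀,
          ((z.1 : ℂ) + z.2 * Complex.I) / c₀ ∈ Complex.slitPlane := by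
        have : IsOpen {z : ℝ × ℝ | ((z.1 : ℂ) + z.2 * Complex.I) / c₀ ∈ Complex.slitPlane} :=
          Complex.isOpen_slitPlane.preimage hdivc
        refine this.mem_nhds ?_
        simp only [Set.mem_setOf_eq, hdiv0]
        exact Complex.one_mem_slitPlane
      have ev_mem : ∀ᶠ z in 𝓝 z₀, z ∈ Ω := by
        rw [hΩeq]
        exact isOpen_ne.mem_nhds hz₀ne
      filter_upwards [ev_ne, ev_slit, ev_mem] with z h1 h2 h3
      exact ⟨h1, h3, h2⟩
  -- common part
  set c₀ : ℂ := (r₀ : ℂ) * Complex.exp ((θ₀ : ℂ) * Complex.I) with hc₀def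
  have hc₀ne : c₀ ≠ 0 := c0_ne hr₀ θ₀
  set w : ℂ → ℂ := fun c => ((C₁ : ℂ) - C₂ * Complex.I) * ((r₀ ^ lam : ℝ) : ℂ)
      * Complex.exp (((lam * θ₀ : ℝ) : ℂ) * Complex.I)
      * Complex.exp ((lam : ℂ) * Complex.log (c / c₀)) with hwdef
  set V : Set ℂ := {c | c / c₀ ∈ Complex.slitPlane} with hVdef
  have hV : IsOpen V := Complex.isOpen_slitPlane.preimage (continuous_id.div_const c₀)
  have hw : DifferentiableOn ℂ w V := by
    intro c hc
    have hlog : DifferentiableAt ℂ (fun c => Complex.log (c / c₀)) c :=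
      (Complex.differentiableAt_log hc).comp (g := Complex.log) c
        (differentiableAt_id.div_const c₀ : DifferentiableAt ℂ (fun x : ℂ => x / c₀) c)
    exact ((((hlog.const_mul (lam : ℂ)).cexp).const_mul
      (((C₁ : ℂ) - C₂ * Complex.I) * ((r₀ ^ lam : ℝ) : ℂ)
        * Complex.exp (((lam * θ₀ : ℝ) : ℂ) * Complex.I)))).differentiableWithinAt
  have hc0 : (z₀.1 : ℂ) + z₀.2 * Complex.I = c₀ := by
    rw [hz₀eq]; exact mk_c0 r₀ θ₀
  have hz₀V : (z₀.1 : ℂ) + z₀.2 * Complex.I ∈ V := by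
    simp only [hVdef, Set.mem_setOf_eq, hc0, div_self hc₀ne]
    exact Complex.one_mem_slitPlane
  -- the three eventual identities
  have hkey : ∀ᶠ z in 𝓝 z₀,
      u₁ z = (w ((z.1 : ℂ) + z.2 * Complex.I)).re ∧
      u₂ z = -(w ((z.1 : ℂ) + z.2 * Complex.I)).im ∧
      p z = -(1/2) * ((w ((z.1 : ℂ) + z.2 * Complex.I)).re ^ 2
          + (w ((z.1 : ℂ) + z.2 * Complex.I)).im ^ 2) + C₃ := by
    filter_upwards [hev] with z hz
    obtain ⟨hne, hΩz, _⟩ := hz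
    set R : ℝ := ‖(z.1 : ℂ) + z.2 * Complex.I‖ with hRdef
    set Θ : ℝ := θ₀ + Complex.arg (((z.1 : ℂ) + z.2 * Complex.I) / c₀) with hΘdef
    have hrep : z = (R * Real.cos Θ, R * Real.sin Θ) := polar_rep_pair hr₀ θ₀ hne
    have hRpos : 0 < R := norm_pos_iff.mpr hne
    have hmem : (R * Real.cos Θ, R * Real.sin Θ) ∈ Ω := hrep ▸ hΩz
    have hval := hu R Θ hRpos hmem
    have hwv : w ((z.1 : ℂ) + z.2 * Complex.I)
        = ((C₁ : ℂ) - C₂ * Complex.I) * ((R ^ lam : ℝ) : ℂ)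
          * Complex.exp (((lam * Θ : ℝ) : ℂ) * Complex.I) :=
      w_value C₁ C₂ θ₀ hr₀ hne
    have hsq : R ^ (2 * lam) = (R ^ lam) ^ 2 := by
      rw [mul_comm, Real.rpow_mul (norm_nonneg _), Real.rpow_two]
    refine ⟨?_, ?_, ?_⟩
    · rw [hrep] at *
      rw [hval.1, hwv, cval_re]
    · rw [hrep] at *
      rw [hval.2.1, hwv, cval_im]
      ring
    · rw [hrep] at *
      rw [hval.2.2, hwv, cval_sq, hsq]
      ring
  exact NS_local C₃ u₁ u₂ p w V hV hw z₀ hz₀V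
    (hkey.mono fun z h => h.1) (hkey.mono fun z h => h.2.1) (hkey.mono fun z h => h.2.2)
end
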